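/- Let N ≥ 2, ω = exp(2πi/N), and let ζ⁰, ζ¹ ∈ ℂ satisfy e^{2πiζ¹}(1 - e^{2πiζ⁰}) = 1 with ω^{ζ⁰+k} ≠ 1 for all k. Define Λ(n) for n ∈ ℤ by Λ(0) = 1 and Λ(n) = ω^{-ζ¹} Λ(n-1)/(1 - ω^{ζ⁰+n}) (so Λ is N-periodic). Then for all integers k, l and m ∈ ℤ: (1/N)·ω^{-(N-1)(ζ⁰+ζ¹)} ∑_{n=0}^{N-1} ω^{n+k} Λ(n+k)/Λ(n+l-1) = δ(k ≡ l mod N)·1, i.e., ∑_{n=0}^{N-1} ω^n Λ(n+k)/Λ(n+l-1) = δ_{l≡k} · N · ω^{-k} · ω^{(N-1)(ζ⁰+ζ¹)}. -/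

import Mathlib

open Complex Finset

lemma aux_prod_one_sub {N : ℕ} (hN : N ≠ 0) {ω : ℂ} (hprim : IsPrimitiveRoot ω N) (y : ℂ) :
    ∏ j ∈ Finset.range N, (1 - y * ω ^ j) = 1 - y ^ N := by
  have h1 : (Polynomial.X ^ N - Polynomial.C (y ^ N) : Polynomial ℂ) =
      ((Polynomial.nthRoots N (y ^ N)).map fun r => Polynomial.X - Polynomial.C r).prod := by
    symm
    apply Polynomial.prod_multiset_X_sub_C_of_monic_of_roots_card_eq
        (Polynomial.monic_X_pow_sub_C _ hN)
    show Multiset.card (Polynomial.nthRoots N (y ^ N)) = _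
    rw [hprim.card_nthRoots, if_pos ⟨y, rfl⟩, Polynomial.natDegree_X_pow_sub_C]
  have h2 := congrArg (Polynomial.eval 1) h1
  rw [Polynomial.eval_sub, Polynomial.eval_pow, Polynomial.eval_X, Polynomial.eval_C, one_pow,
    Polynomial.eval_multiset_prod, Multiset.map_map, hprim.nthRoots_eq rfl,
    Multiset.map_map] at h2
  have h3 : ∏ j ∈ Finset.range N, (1 - y * ω ^ j)
      = ((Multiset.range N).map fun j => 1 - y * ω ^ j).prod := by
    rw [← Finset.range_val]; rfl
  rw [h2, h3]
  congr 1
  apply Multiset.map_congr rfl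
  intro j _
  simp [mul_comm]

theorem stmt_16 (N : ℕ) (hN : 2 ≤ N) (ζ0 ζ1 : ℂ)
    (ωpow : ℂ → ℂ) (hωpow : ∀ ζ : ℂ, ωpow ζ = Complex.exp (2 * Real.pi * I * ζ / N))
    (hflat : Complex.exp (2 * Real.pi * I * ζ1) *
      (1 - Complex.exp (2 * Real.pi * I * ζ0)) = 1)
    (hnz : ∀ k : ℤ, ωpow (ζ0 + (k : ℂ)) ≠ 1)
    (Λ : ℤ → ℂ) (hΛ0 : Λ 0 = 1)
    (hrec : ∀ n : ℤ, Λ n = ωpow (-ζ1) * Λ (n - 1) / (1 - ωpow (ζ0 + (n : ℂ)))) :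
    ∀ k l : ℤ,
      ∑ n ∈ Finset.range N, ωpow (n : ℂ) * Λ ((n : ℤ) + k) / Λ ((n : ℤ) + l - 1)
        = (if (k - l) % (N : ℤ) = 0 then 1 else 0) * N * ωpow (-(k : ℂ)) *
          ωpow ((N - 1 : ℂ) * (ζ0 + ζ1)) := by
  intro k l
  have hNne : (N : ℂ) ≠ 0 := Nat.cast_ne_zero.mpr (by omega)
  have hN0 : N ≠ 0 := by omega
  set ω : ℂ := Complex.exp (2 * Real.pi * I / N) with hωdef
  have hprim : IsPrimitiveRoot ω N := Complex.isPrimitiveRoot_exp N hN0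
  have hmul : ∀ a b : ℂ, ωpow (a + b) = ωpow a * ωpow b := by
    intro a b
    rw [hωpow, hωpow, hωpow, ← Complex.exp_add]
    congr 1; ring
  have hne : ∀ a : ℂ, ωpow a ≠ 0 := fun a => by rw [hωpow]; exact Complex.exp_ne_zero _
  have hωnat : ∀ n : ℕ, ωpow (n : ℂ) = ω ^ n := by
    intro n
    rw [hωpow, hωdef, ← Complex.exp_nat_mul]
    congr 1; ring
  have hωint : ∀ n : ℤ, ωpow (n : ℂ) = ω ^ n := by
    intro n
    rw [hωpow, hωdef, ← Complex.exp_int_mul]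
    congr 1; ring
  have hωN : ω ^ N = 1 := hprim.pow_eq_one
  have hperC : ∀ a : ℂ, ωpow (a + N) = ωpow a := by
    intro a; rw [hmul, hωnat, hωN, mul_one]
  have hden : ∀ n : ℤ, 1 - ωpow (ζ0 + n) ≠ 0 := fun n => sub_ne_zero.mpr fun hc => hnz n hc.symm
  have hstep : ∀ n : ℤ, Λ n * (1 - ωpow (ζ0 + n)) = ωpow (-ζ1) * Λ (n - 1) := by
    intro n
    rw [hrec n, div_mul_cancel₀ _ (hden n)]
  have hΛne : ∀ n : ℤ, Λ n ≠ 0 := by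
    intro n
    induction n using Int.induction_on with
    | zero => rw [hΛ0]; exact one_ne_zero
    | succ i ih =>
        rw [hrec (i + 1), add_sub_cancel_right]
        exact div_ne_zero (mul_ne_zero (hne _) ih) (hden _)
    | pred i ih =>
        intro h0
        exact ih (by rw [hrec (-i), h0, mul_zero, zero_div])
  set E0 : ℂ := Complex.exp (2 * Real.pi * I * ζ0) with hE0def
  set E1 : ℂ := Complex.exp (2 * Real.pi * I * ζ1) with hE1def
  have hE1ne : E1 ≠ 0 := Complex.exp_ne_zero _
  have hE0ne : (1 : ℂ) - E0 ≠ 0 := by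
    intro hc; rw [hc, mul_zero] at hflat; exact one_ne_zero hflat.symm
  have hNexp : ∀ c : ℂ, (ωpow c) ^ N = Complex.exp (2 * Real.pi * I * c) := by
    intro c
    rw [hωpow, ← Complex.exp_nat_mul]
    congr 1
    field_simp
  have hω1 : ωpow 1 = ω := by rw [hωpow, hωdef]; congr 1; ring
  -- Λ is N-periodic
  have hclaim : ∀ m : ℕ,
      Λ m * ∏ j ∈ Finset.range m, (1 - ωpow (ζ0 + ((j : ℂ) + 1))) = ωpow (-ζ1) ^ m := by
    intro m
    induction m with
    | zero => simp [hΛ0]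
    | succ m ih =>
        rw [Finset.prod_range_succ, pow_succ]
        have h1 := hstep ((m : ℤ) + 1)
        rw [add_sub_cancel_right] at h1
        push_cast at h1 ⊢
        linear_combination (∏ j ∈ Finset.range m, (1 - ωpow (ζ0 + ((j : ℂ) + 1)))) * h1
          + ωpow (-ζ1) * ih
  have hΛN : Λ (N : ℤ) = 1 := by
    have h1 := hclaim N
    have h2 : ∏ j ∈ Finset.range N, (1 - ωpow (ζ0 + ((j : ℂ) + 1))) = 1 - E0 := by
      have e : ∀ j ∈ Finset.range N, (1 - ωpow (ζ0 + ((j : ℂ) + 1)))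
          = 1 - (ωpow ζ0 * ω) * ω ^ j := by
        intro j _
        rw [show ζ0 + ((j : ℂ) + 1) = (ζ0 + 1) + (j : ℂ) by ring, hmul, hmul, hω1, hωnat,
          mul_assoc]
      rw [Finset.prod_congr rfl e, aux_prod_one_sub hN0 hprim, mul_pow, hωN, mul_one, hNexp]
    have h3 : ωpow (-ζ1) ^ N = E1⁻¹ := by
      rw [hNexp, hE1def, ← Complex.exp_neg]; congr 1; ring
    rw [h2, h3] at h1
    field_simp at h1
    linear_combination h1 - Λ (N : ℤ) * hflat
  have hΛper : ∀ n : ℤ, Λ (n + N) = Λ n := by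
    intro n
    induction n using Int.induction_on with
    | zero => rw [zero_add, hΛN, hΛ0]
    | succ i ih =>
        rw [hrec ((i : ℤ) + 1 + N), hrec ((i : ℤ) + 1),
          show (i : ℤ) + 1 + N - 1 = (i : ℤ) + N by ring, ih,
          show (i : ℤ) + 1 - 1 = (i : ℤ) by ring]
        congr 2
        push_cast
        rw [show ζ0 + ((i : ℂ) + 1 + N) = (ζ0 + ((i : ℂ) + 1)) + N by ring, hperC]
    | pred i ih =>
        have h1 := hstep (-(i : ℤ) + N)
        have h2 := hstep (-(i : ℤ))
        rw [ih] at h1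
        have e : ωpow (ζ0 + ((-(i : ℤ) + N : ℤ) : ℂ)) = ωpow (ζ0 + ((-(i : ℤ) : ℤ) : ℂ)) := by
          push_cast
          rw [show ζ0 + (-(i : ℂ) + N) = (ζ0 + -(i : ℂ)) + N by ring, hperC]
        rw [e] at h1
        have h3 := mul_left_cancel₀ (hne (-ζ1)) (h1.symm.trans h2)
        rw [show -(i : ℤ) - 1 + N = -(i : ℤ) + N - 1 by ring, h3]
  have hΛsub : ∀ n : ℤ, Λ (n - N) = Λ n := by
    intro n
    have h := hΛper (n - N)
    rw [sub_add_cancel] at h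
    exact h.symm
  have hΛperZ : ∀ (t : ℤ) (n : ℤ), Λ (n + t * N) = Λ n := by
    intro t
    induction t using Int.induction_on with
    | zero => intro n; simp
    | succ i ih =>
        intro n
        rw [show n + ((i : ℤ) + 1) * N = (n + i * N) + N by ring, hΛper, ih]
    | pred i ih =>
        intro n
        rw [show n + (-(i : ℤ) - 1) * N = (n + -(i : ℤ) * N) - N by ring, hΛsub, ih]
  set a : ℂ := ωpow (ζ0 + (k : ℂ)) with ha
  set b : ℂ := ωpow (ζ0 + (l : ℂ)) with hb
  have hsplit : ∀ n m : ℤ, ωpow (ζ0 + ((n + m : ℤ) : ℂ)) = ωpow (ζ0 + (m : ℂ)) * ωpow (n : ℂ) := by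
    intro n m
    rw [← hmul]
    congr 1
    push_cast
    ring
  by_cases hkl : (k - l) % (N : ℤ) = 0
  · -- diagonal case
    obtain ⟨t, ht⟩ := Int.dvd_of_emod_eq_zero hkl
    rw [if_pos hkl, one_mul]
    have hl : ∀ n : ℤ, Λ (n + l - 1) = Λ (n + k - 1) := by
      intro n
      rw [show n + l - 1 = (n + k - 1) + (-t) * N by linear_combination -ht]
      exact hΛperZ (-t) _
    have hratio : ∀ n : ℤ, Λ (n + k) / Λ (n + k - 1)
        = ωpow (-ζ1) / (1 - ωpow (ζ0 + ((n + k : ℤ) : ℂ))) := by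
      intro n
      rw [div_eq_div_iff (hΛne _) (hden _)]
      linear_combination hstep (n + k)
    have hz : ∀ n : ℕ, ωpow (ζ0 + (((n : ℤ) + k : ℤ) : ℂ)) = a * ω ^ n := by
      intro n
      rw [hsplit, ha]
      congr 1
      rw [show (((n : ℤ) : ℂ)) = ((n : ℕ) : ℂ) by push_cast; ring, hωnat]
    have haN : a ^ N = E0 := by
      rw [ha, hNexp, hE0def,
        show 2 * (Real.pi : ℂ) * I * (ζ0 + (k : ℂ)) = 2 * Real.pi * I * ζ0 + (k : ℂ) * (2 * Real.pi * I) by ring,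
        Complex.exp_add, Complex.exp_int_mul_two_pi_mul_I, mul_one]
    have hinv : ∀ n : ℕ, (1 - a * ω ^ n)⁻¹
        = (∑ j ∈ Finset.range N, (a * ω ^ n) ^ j) * (1 - E0)⁻¹ := by
      intro n
      have hne1 : 1 - a * ω ^ n ≠ 0 := by
        have h := hden ((n : ℤ) + k)
        rwa [hz n] at h
      have hzN : (a * ω ^ n) ^ N = E0 := by
        rw [mul_pow, ← pow_mul, mul_comm n N, pow_mul, hωN, one_pow, mul_one, haN]
      have hgs : (∑ j ∈ Finset.range N, (a * ω ^ n) ^ j) * (1 - a * ω ^ n) = 1 - E0 := by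
        have h := geom_sum_mul (a * ω ^ n) N
        linear_combination -h - hzN
      field_simp
      linear_combination -hgs
    have hterm : ∀ n ∈ Finset.range N, ωpow (n : ℂ) * Λ ((n : ℤ) + k) / Λ ((n : ℤ) + l - 1)
        = ωpow (-ζ1) * (1 - E0)⁻¹ * ∑ j ∈ Finset.range N, a ^ j * (ω ^ (j + 1)) ^ n := by
      intro n _
      have hsum : ωpow (n : ℂ) * ∑ j ∈ Finset.range N, (a * ω ^ n) ^ j
          = ∑ j ∈ Finset.range N, a ^ j * (ω ^ (j + 1)) ^ n := by
        rw [Finset.mul_sum]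
        apply Finset.sum_congr rfl
        intro j _
        have e : (ω ^ (j + 1)) ^ n = ω ^ (n * j) * ω ^ n := by
          rw [← pow_mul, ← pow_add]
          congr 1
          ring
        rw [hωnat n, e, mul_pow, ← pow_mul]
        ring
      rw [hl, mul_div_assoc, hratio, div_eq_mul_inv, hz, hinv]
      linear_combination (ωpow (-ζ1) * (1 - E0)⁻¹) * hsum
    rw [Finset.sum_congr rfl hterm, ← Finset.mul_sum, Finset.sum_comm]
    have hinner : ∀ j ∈ Finset.range N,
        ∑ n ∈ Finset.range N, a ^ j * (ω ^ (j + 1)) ^ n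
          = if j = N - 1 then (N : ℂ) * a ^ j else 0 := by
      intro j hj
      rw [← Finset.mul_sum]
      rcases eq_or_ne j (N - 1) with hj1 | hj1
      · rw [if_pos hj1, hj1, show N - 1 + 1 = N by omega, hωN]
        simp [Finset.card_range]
        ring
      · rw [if_neg hj1]
        have hne1 : ω ^ (j + 1) ≠ 1 :=
          hprim.pow_ne_one_of_pos_of_lt (Nat.succ_ne_zero j)
            (by have := Finset.mem_range.mp hj; omega)
        rw [geom_sum_eq hne1, ← pow_mul, show (j + 1) * N = N * (j + 1) by ring, pow_mul, hωN,
          one_pow, sub_self, zero_div, mul_zero]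
    rw [Finset.sum_congr rfl hinner, Finset.sum_ite_eq' (Finset.range N) (N - 1)
      (fun j => (N : ℂ) * a ^ j), if_pos (Finset.mem_range.mpr (by omega))]
    -- final computation
    have hE1inv : (1 - E0)⁻¹ = E1 := inv_eq_of_mul_eq_one_left hflat
    have hcast : ((N - 1 : ℕ) : ℂ) = (N : ℂ) - 1 := by
      rw [Nat.cast_sub (by omega : 1 ≤ N)]; norm_num
    have e3 : a ^ (N - 1)
        = Complex.exp (((N : ℂ) - 1) * (2 * Real.pi * I * (ζ0 + (k : ℂ)) / N)) := by
      rw [ha, hωpow, ← Complex.exp_nat_mul, hcast]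
    have hE : Complex.exp (2 * Real.pi * I * (-ζ1) / N) * E1 *
          Complex.exp (((N : ℂ) - 1) * (2 * Real.pi * I * (ζ0 + (k : ℂ)) / N))
        = Complex.exp (2 * Real.pi * I * (-(k : ℂ)) / N) *
          Complex.exp (2 * Real.pi * I * (((N : ℂ) - 1) * (ζ0 + ζ1)) / N) := by
      rw [hE1def, ← Complex.exp_add, ← Complex.exp_add, ← Complex.exp_add]
      rw [show 2 * (Real.pi : ℂ) * I * (-ζ1) / N + 2 * Real.pi * I * ζ1 +
            ((N : ℂ) - 1) * (2 * Real.pi * I * (ζ0 + (k : ℂ)) / N)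
          = (2 * Real.pi * I * (-(k : ℂ)) / N + 2 * Real.pi * I * (((N : ℂ) - 1) * (ζ0 + ζ1)) / N)
            + (k : ℂ) * (2 * Real.pi * I) by field_simp; ring,
        Complex.exp_add, Complex.exp_int_mul_two_pi_mul_I, mul_one]
    rw [hE1inv, e3, hωpow (-ζ1), hωpow (-(k : ℂ)), hωpow (((N : ℂ) - 1) * (ζ0 + ζ1))]
    linear_combination (N : ℂ) * hE
  · -- off-diagonal case
    rw [if_neg hkl, zero_mul, zero_mul, zero_mul]
    set r : ℤ → ℂ := fun n => Λ (n + k) / Λ (n + l - 1) with hr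
    set g : ℤ → ℂ := fun n => ωpow (n : ℂ) * r n with hg
    have hrper : ∀ n : ℤ, r (n + N) = r n := by
      intro n
      simp only [hr]
      rw [show n + (N : ℤ) + k = (n + k) + N by ring, show n + (N : ℤ) + l - 1 = (n + l - 1) + N by ring,
        hΛper, hΛper]
    have hgper : ∀ n : ℤ, g (n + N) = g n := by
      intro n
      simp only [hg]
      rw [hrper]
      congr 1
      rw [show (((n + N : ℤ)) : ℂ) = (n : ℂ) + N by push_cast; ring, hperC]
    have hshift : ∀ f : ℤ → ℂ, (∀ n, f (n + N) = f n) →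
        ∑ n ∈ Finset.range N, f ((n : ℤ) - 1) = ∑ n ∈ Finset.range N, f (n : ℤ) := by
      intro f hf
      obtain ⟨M, rfl⟩ : ∃ M, N = M + 1 := ⟨N - 1, by omega⟩
      rw [Finset.sum_range_succ' (fun n : ℕ => f ((n : ℤ) - 1)) M,
        Finset.sum_range_succ (fun n : ℕ => f (n : ℤ)) M]
      congr 1
      · apply Finset.sum_congr rfl
        intro i _
        congr 1
        push_cast
        ring
      · have h := hf (-1)
        rw [show (-1 : ℤ) + ((M + 1 : ℕ) : ℤ) = (M : ℤ) by push_cast; ring] at h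
        rw [show ((0 : ℕ) : ℤ) - 1 = (-1 : ℤ) by norm_num]
        exact h.symm
    have hrel : ∀ n : ℤ, r n - a * g n = r (n - 1) - b * g (n - 1) := by
      intro n
      have h1 := hstep (n + k)
      rw [show n + k - 1 = n - 1 + k by ring, hsplit n k] at h1
      have h2 := hstep (n + l - 1)
      rw [show n + l - 1 - 1 = n - 1 + l - 1 by ring,
        show ζ0 + ((n + l - 1 : ℤ) : ℂ) = ζ0 + ((n - 1 + l : ℤ) : ℂ) by push_cast; ring,
        hsplit (n - 1) l] at h2
      rw [show (((n - 1 : ℤ)) : ℂ) = (n : ℂ) - 1 by push_cast; ring] at h2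
      simp only [hr, hg]
      have d1 := hΛne (n + l - 1)
      have d2 := hΛne (n - 1 + l - 1)
      field_simp
      push_cast
      linear_combination (Λ (n - 1 + l - 1) * h1 - Λ (n - 1 + k) * h2)
    have hab : a ≠ b := by
      intro hc
      apply hkl
      rw [ha, hb, hmul, hmul, hωint k, hωint l] at hc
      have hωne : ω ≠ 0 := by rw [hωdef]; exact Complex.exp_ne_zero _
      have h1 : ω ^ k = ω ^ l := mul_left_cancel₀ (hne ζ0) hc
      have h2 : ω ^ (k - l) = 1 := by
        rw [zpow_sub₀ hωne, h1, div_self (zpow_ne_zero _ hωne)]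
      exact Int.emod_eq_zero_of_dvd ((hprim.zpow_eq_one_iff_dvd _).mp h2)
    have hS : ∑ n ∈ Finset.range N, g ((n : ℤ)) = 0 := by
      have h1 : ∑ n ∈ Finset.range N, (r ((n : ℤ)) - a * g ((n : ℤ)))
          = ∑ n ∈ Finset.range N, (r ((n : ℤ) - 1) - b * g ((n : ℤ) - 1)) :=
        Finset.sum_congr rfl fun n _ => hrel n
      rw [Finset.sum_sub_distrib, Finset.sum_sub_distrib, ← Finset.mul_sum, ← Finset.mul_sum,
        hshift r hrper, hshift g hgper] at h1
      have h2 : (a - b) * ∑ n ∈ Finset.range N, g ((n : ℤ)) = 0 := by linear_combination -h1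
      rcases mul_eq_zero.mp h2 with h | h
      · exact absurd (sub_eq_zero.mp h) hab
      · exact h
    rw [← hS]
    apply Finset.sum_congr rfl
    intro n _
    simp only [hg, hr]
    rw [mul_div_assoc]
    norm_cast
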